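/- If G is a finite connected vd-graph with at least two vertices, then its bipartite double G × K₂ is a vd-graph. -/

import Mathlib

open SimpleGraph

/-- The bipartite double `B(G) = G × K₂` of a graph `G`: vertices are `V(G) × {0,1}`,
and `(x,a)` is adjacent to `(y,b)` iff `a ≠ b` and `x` is adjacent to `y` in `G`. -/
def bipartiteDouble {V : Type*} (G : SimpleGraph V) : SimpleGraph (V × Bool) where
  Adj x y := x.2 ≠ y.2 ∧ G.Adj x.1 y.1
  symm := ⟨fun _ _ h => ⟨h.1.symm, h.2.symm⟩⟩
  loopless := ⟨fun _ h => h.1 rfl⟩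

/-- If `G` is a finite connected vd-graph with at least two vertices, then
its bipartite double `G × K₂` is a vd-graph. -/
theorem stmt_12 {V : Type*} [Fintype V] (G : SimpleGraph V)
    (hconn : G.Connected) (hcard : 2 ≤ Fintype.card V)
    (hvd : ∀ v w : V, G.neighborSet v = G.neighborSet w → v = w) :
    ∀ x y : V × Bool, (bipartiteDouble G).neighborSet x = (bipartiteDouble G).neighborSet y →
      x = y := by
  have hnb : ∀ v : V, ∃ u, G.Adj v u := by
    intro v
    obtain ⟨w, hw⟩ := Fintype.exists_ne_of_one_lt_card (by omega) v
    obtain ⟨p⟩ := hconn v w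
    cases p with
    | nil => exact absurd rfl hw
    | cons h _ => exact ⟨_, h⟩
  rintro ⟨v, a⟩ ⟨w, b⟩ h
  have hmem : ∀ u c, ((u, c) ∈ (bipartiteDouble G).neighborSet (v, a) ↔
      (u, c) ∈ (bipartiteDouble G).neighborSet (w, b)) := by
    intro u c; rw [h]
  obtain ⟨u, hu⟩ := hnb v
  have h1 : (u, !a) ∈ (bipartiteDouble G).neighborSet (v, a) := by
    simp [bipartiteDouble, neighborSet, hu]
  have hab : a = b := by
    have := (hmem u (!a)).mp h1
    simp only [bipartiteDouble, mem_neighborSet] at this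
    rcases this with ⟨hne, -⟩
    cases a <;> cases b <;> simp_all
  subst hab
  have : G.neighborSet v = G.neighborSet w := by
    ext z
    have := hmem z (!a)
    simp only [bipartiteDouble, mem_neighborSet] at this
    constructor
    · intro hz
      exact ((this.mp ⟨by cases a <;> simp, hz⟩).2).symm.symm
    · intro hz
      exact ((this.mpr ⟨by cases a <;> simp, hz⟩).2)
  exact congrArg (·, a) (hvd v w this)
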